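/- The coalition number of the 3-dimensional hypercube graph Q_3 equals 8; in particular, the partition of V(Q_3) into eight singletons is a coalition partition. -/
import Mathlib


open Finset

/-- `S` is a dominating set of `G`: every vertex outside `S` has a neighbor in `S`. -/
def Dominates {V : Type*} (G : SimpleGraph V) (S : Finset V) : Prop :=
  ∀ v ∉ S, ∃ u ∈ S, G.Adj u v

/-- Two disjoint non-dominating sets whose union dominates form a coalition. -/
def FormsCoalition {V : Type*} [DecidableEq V] (G : SimpleGraph V) (X Y : Finset V) : Prop :=
  ¬ Dominates G X ∧ ¬ Dominates G Y ∧ Dominates G (X ∪ Y)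

/-- A coalition partition: every class is a singleton dominating set, or is a
non-dominating set forming a coalition with another class. -/
def IsCoalitionPartition {V : Type*} [Fintype V] [DecidableEq V] (G : SimpleGraph V)
    (π : Finpartition (univ : Finset V)) : Prop :=
  ∀ X ∈ π.parts, (X.card = 1 ∧ Dominates G X) ∨
    (¬ Dominates G X ∧ ∃ Y ∈ π.parts, Y ≠ X ∧ ¬ Dominates G Y ∧ Dominates G (X ∪ Y))

/-- The coalition number: the maximum order of a coalition partition. -/
noncomputable def coalitionNumber (V : Type*) [Fintype V] [DecidableEq V]
    (G : SimpleGraph V) : ℕ :=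
  sSup {k | ∃ π : Finpartition (univ : Finset V), IsCoalitionPartition G π ∧ π.parts.card = k}

def cubeQ3 : SimpleGraph (Fin 3 → Bool) :=
  SimpleGraph.fromRel (fun a b => (univ.filter (fun i => a i ≠ b i)).card = 1)

instance : DecidableRel cubeQ3.Adj := fun a b => by
  unfold cubeQ3 SimpleGraph.fromRel
  exact instDecidableAnd

instance {S : Finset (Fin 3 → Bool)} : Decidable (Dominates cubeQ3 S) := by
  unfold Dominates; infer_instance

lemma key : ∀ v : Fin 3 → Bool, ¬ Dominates cubeQ3 {v} ∧
    Dominates cubeQ3 ({v} ∪ {fun i => !v i}) := by decide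

lemma bot_iscp : IsCoalitionPartition cubeQ3 ((⊥ : Finpartition (univ : Finset (Fin 3 → Bool)))) := by
  intro X hX
  rw [Finpartition.mem_bot_iff] at hX
  obtain ⟨a, -, rfl⟩ := hX
  right
  refine ⟨(key a).1, {fun i => !a i}, ?_, ?_, (key _).1, (key a).2⟩
  · rw [Finpartition.mem_bot_iff]; exact ⟨_, mem_univ _, rfl⟩
  · simp only [ne_eq, Finset.singleton_inj]
    intro h
    simpa using congrFun h 0

theorem stmt7 : coalitionNumber (Fin 3 → Bool) cubeQ3 = 8 ∧
    IsCoalitionPartition cubeQ3 ((⊥ : Finpartition (univ : Finset (Fin 3 → Bool)))) := by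
  refine ⟨?_, bot_iscp⟩
  have hcard : (univ : Finset (Fin 3 → Bool)).card = 8 := by decide
  apply le_antisymm
  · apply csSup_le
    · exact ⟨8, ⊥, bot_iscp, by rw [Finpartition.card_bot, hcard]⟩
    · rintro k ⟨π, -, rfl⟩
      calc π.parts.card ≤ _ := π.card_parts_le_card
        _ = 8 := hcard
  · apply le_csSup
    · exact ⟨8, by rintro k ⟨π, -, rfl⟩; exact hcard ▸ π.card_parts_le_card⟩
    · exact ⟨⊥, bot_iscp, by rw [Finpartition.card_bot, hcard]⟩
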